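/- arXiv:0903.2136 — 6 statements merged into one kernel-verified Lean document; each statement's English description precedes it below -/
import Mathlib

section
/- Let r ≥ 2 be a natural number, θ = 2π/r, and let R be the 3×3 rotation matrix about the z-axis with rows (cos θ, sin θ, 0), (−sin θ, cos θ, 0), (0, 0, 1). Let z ∈ ℝ and q = (q₁,q₂,q₃) ∈ ℝ³ with (0,0,z) ≠ q. Then Σ_{j=0}^{r−1} ((0,0,z) − Rʲq)/‖(0,0,z) − Rʲq‖³ = (0, 0, r·(z − q₃)/‖(0,0,z) − q‖³). In particular, the gravitational force exerted at a point of the vertical axis by a cyclic R-symmetric configuration of equal masses is parallel to the axis. -/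
/-- ℝ³ with the Euclidean norm. -/
noncomputable def toE3 : (Fin 3 → ℝ) → EuclideanSpace ℝ (Fin 3) :=
  (EuclideanSpace.equiv (Fin 3) ℝ).symm

lemma rotpow (θ : ℝ) (j : ℕ) :
    (!![Real.cos θ, Real.sin θ, 0; -Real.sin θ, Real.cos θ, 0; (0:ℝ),0,1]) ^ j
    = !![Real.cos (j*θ), Real.sin (j*θ), 0; -Real.sin (j*θ), Real.cos (j*θ), 0; 0,0,1] := by
  induction j with
  | zero => simp [Matrix.one_fin_three]
  | succ n ih =>
    have h : ((n+1:ℕ):ℝ) * θ = n*θ + θ := by push_cast; ring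
    rw [pow_succ, ih, h, Real.cos_add, Real.sin_add]
    ext i k
    fin_cases i <;> fin_cases k <;>
      simp [Matrix.mul_apply, Fin.sum_univ_three] <;> ring

lemma sum_cos_sin (r : ℕ) (hr : 2 ≤ r) :
    (∑ j ∈ Finset.range r, Real.cos (j * (2 * Real.pi / r)) = 0) ∧
    (∑ j ∈ Finset.range r, Real.sin (j * (2 * Real.pi / r)) = 0) := by
  have hprim := Complex.isPrimitiveRoot_exp r (by omega)
  have hz : ∑ j ∈ Finset.range r, Complex.exp (2 * Real.pi * Complex.I / r) ^ j = 0 :=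
    hprim.geom_sum_eq_zero (by omega)
  have he : ∀ j : ℕ, Complex.exp (2 * Real.pi * Complex.I / r) ^ j
      = Complex.exp ((j * (2 * Real.pi / r) : ℝ) * Complex.I) := by
    intro j
    rw [← Complex.exp_nat_mul]
    congr 1
    push_cast
    ring
  have hz' : ∑ j ∈ Finset.range r, Complex.exp ((j * (2 * Real.pi / r) : ℝ) * Complex.I) = 0 := by
    rw [← Finset.sum_congr rfl (fun j _ => he j)]; exact hz
  constructor
  · have : ∑ j ∈ Finset.range r, Real.cos (j * (2 * Real.pi / r))
        = (∑ j ∈ Finset.range r, Complex.exp ((j * (2 * Real.pi / r) : ℝ) * Complex.I)).re := by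
      rw [Complex.re_sum]
      exact Finset.sum_congr rfl fun j _ => (Complex.exp_ofReal_mul_I_re _).symm
    rw [this, hz', Complex.zero_re]
  · have : ∑ j ∈ Finset.range r, Real.sin (j * (2 * Real.pi / r))
        = (∑ j ∈ Finset.range r, Complex.exp ((j * (2 * Real.pi / r) : ℝ) * Complex.I)).im := by
      rw [Complex.im_sum]
      exact Finset.sum_congr rfl fun j _ => (Complex.exp_ofReal_mul_I_im _).symm
    rw [this, hz', Complex.zero_im]

lemma toE3_apply (v : Fin 3 → ℝ) (i : Fin 3) : toE3 v i = v i := rfl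

lemma sum_smul_toE3 (s : Finset ℕ) (c : ℝ) (v : ℕ → Fin 3 → ℝ) :
    ∑ j ∈ s, c • toE3 (v j) = toE3 (∑ j ∈ s, c • v j) := by
  classical
  induction s using Finset.induction_on with
  | empty => rfl
  | insert _ _ h ih =>
    rw [Finset.sum_insert h, Finset.sum_insert h, ih]
    rfl


/-- For R the rotation by 2π/r about the z-axis (r ≥ 2), z ∈ ℝ and q ∈ ℝ³ with
(0,0,z) ≠ q, the gravitational force sum satisfies
Σ_{j=0}^{r−1} ((0,0,z) − Rʲq)/‖(0,0,z) − Rʲq‖³ = (0, 0, r(z − q₃)/‖(0,0,z) − q‖³):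
the force exerted at a point of the axis by a cyclic symmetric configuration is parallel
to the axis. -/
theorem stmt7 (r : ℕ) (hr : 2 ≤ r) (θ : ℝ) (hθ : θ = 2 * Real.pi / r)
    (R : Matrix (Fin 3) (Fin 3) ℝ)
    (hR : R = !![Real.cos θ, Real.sin θ, 0;
                 -Real.sin θ, Real.cos θ, 0;
                 0, 0, 1])
    (z : ℝ) (q : Fin 3 → ℝ) (hne : ![0, 0, z] ≠ q) :
    ∑ j ∈ Finset.range r,
        (‖toE3 (![0, 0, z] - (R ^ j).mulVec q)‖ ^ 3)⁻¹ •
          toE3 (![0, 0, z] - (R ^ j).mulVec q)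
      = toE3 ![0, 0, (r : ℝ) * (z - q 2) / ‖toE3 (![0, 0, z] - q)‖ ^ 3] := by
  subst hR
  have hmul : ∀ j : ℕ,
      ((!![Real.cos θ, Real.sin θ, 0; -Real.sin θ, Real.cos θ, 0; (0:ℝ), 0, 1]) ^ j).mulVec q
      = ![Real.cos (j*θ) * q 0 + Real.sin (j*θ) * q 1,
          -Real.sin (j*θ) * q 0 + Real.cos (j*θ) * q 1, q 2] := by
    intro j
    rw [rotpow]
    ext i
    fin_cases i <;> simp [Matrix.mulVec, dotProduct, Fin.sum_univ_three, Matrix.vecHead, Matrix.vecTail]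
  have hnorm : ∀ j : ℕ,
      ‖toE3 (![0, 0, z] -
        ((!![Real.cos θ, Real.sin θ, 0; -Real.sin θ, Real.cos θ, 0; (0:ℝ), 0, 1]) ^ j).mulVec q)‖
      = ‖toE3 (![0, 0, z] - q)‖ := by
    intro j
    rw [hmul]
    simp only [EuclideanSpace.norm_eq, toE3_apply, Real.norm_eq_abs, sq_abs,
      Fin.sum_univ_three, Pi.sub_apply]
    congr 1
    have h1 := Real.sin_sq_add_cos_sq (j*θ)
    simp only [Matrix.cons_val_zero, Matrix.cons_val_one, Matrix.head_cons,
      Matrix.cons_val_two, Matrix.tail_cons]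
    nlinarith [h1]
  simp only [hnorm]
  simp only [hmul]
  rw [sum_smul_toE3]
  congr 1
  funext i
  simp only [toE3_apply, Finset.sum_apply, Pi.smul_apply, smul_eq_mul, Pi.sub_apply]
  rw [← Finset.mul_sum]
  obtain ⟨hc, hs⟩ := sum_cos_sin r hr
  rw [← hθ] at hc hs
  fin_cases i
  · simp only [Fin.zero_eta, Fin.isValue, Matrix.cons_val_zero]
    have : ∑ j ∈ Finset.range r,
        ((0:ℝ) - (Real.cos (j*θ) * q 0 + Real.sin (j*θ) * q 1))
        = (∑ j ∈ Finset.range r, Real.cos (j*θ)) * (-q 0)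
          + (∑ j ∈ Finset.range r, Real.sin (j*θ)) * (-q 1) := by
      rw [Finset.sum_mul, Finset.sum_mul, ← Finset.sum_add_distrib]
      exact Finset.sum_congr rfl fun j _ => by ring
    rw [this, hc, hs]
    ring
  · simp only [Fin.mk_one, Fin.isValue, Matrix.cons_val_one, Matrix.head_cons, Matrix.cons_val_zero]
    have : ∑ j ∈ Finset.range r,
        ((0:ℝ) - (-Real.sin (j*θ) * q 0 + Real.cos (j*θ) * q 1))
        = (∑ j ∈ Finset.range r, Real.sin (j*θ)) * (q 0)
          + (∑ j ∈ Finset.range r, Real.cos (j*θ)) * (-q 1) := by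
      rw [Finset.sum_mul, Finset.sum_mul, ← Finset.sum_add_distrib]
      exact Finset.sum_congr rfl fun j _ => by ring
    rw [this, hc, hs]
    ring
  · simp only [Fin.reduceFinMk, Fin.isValue, Matrix.cons_val_two, Matrix.tail_cons, Matrix.head_cons]
    rw [Finset.sum_const, Finset.card_range, nsmul_eq_mul]
    rw [div_eq_mul_inv]
    ring
end

section
/- (Invariance of the axis for the restricted body.) Let r ≥ 2, θ = 2π/r, and let R be the 3×3 rotation matrix about the z-axis with rows (cos θ, sin θ, 0), (−sin θ, cos θ, 0), (0, 0, 1). Let I ⊆ ℝ be an open interval, let c₁,…,c_s : I → ℝ³ be continuous curves (the representatives of the R-symmetric primaries), let m̂₁,…,m̂_s > 0 and m_I > 0 be masses. Suppose q, p : I → ℝ³ are differentiable and satisfy for all t ∈ I: q′(t) = p(t)/m_I and p′(t) = −m_I · Σ_{k=1}^{s} Σ_{j=0}^{r−1} m̂ₖ · (q(t) − Rʲcₖ(t))/‖q(t) − Rʲcₖ(t)‖³, with q(t) ≠ Rʲcₖ(t) for all t, k, j. If at some t₀ ∈ I the initial conditions satisfy q(t₀) = (0, 0, z₀) and p(t₀)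 = (0, 0, w₀) for some z₀, w₀ ∈ ℝ, then for all t ∈ I the first two components of q(t) and of p(t) vanish; i.e., the restricted body evolves in rectilinear motion on the vertical axis. -/
lemma toE3_sub (x y : Fin 3 → ℝ) : toE3 (x - y) = toE3 x - toE3 y := rfl
lemma toE3_smul (c : ℝ) (x : Fin 3 → ℝ) : toE3 (c • x) = c • toE3 x := rfl

lemma toE3_ne_zero {x : Fin 3 → ℝ} (h : x ≠ 0) : toE3 x ≠ 0 := by
  intro h0
  exact h ((EuclideanSpace.equiv (Fin 3) ℝ).symm.injective (by simpa [toE3] using h0))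

lemma norm_toE3_eq (x : Fin 3 → ℝ) :
    ‖toE3 x‖ = Real.sqrt (x 0 ^ 2 + x 1 ^ 2 + x 2 ^ 2) := by
  rw [EuclideanSpace.norm_eq]
  simp [toE3, Fin.sum_univ_three, Real.norm_eq_abs, sq_abs]

lemma pi_norm_le_toE3 (x : Fin 3 → ℝ) : ‖x‖ ≤ ‖toE3 x‖ := by
  rw [norm_toE3_eq]
  rw [pi_norm_le_iff_of_nonneg (Real.sqrt_nonneg _)]
  intro i
  rw [Real.norm_eq_abs, ← Real.sqrt_sq_eq_abs]
  apply Real.sqrt_le_sqrt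
  fin_cases i <;> simp <;> nlinarith [sq_nonneg (x 0), sq_nonneg (x 1), sq_nonneg (x 2)]

lemma toE3_le_sqrt3 (x : Fin 3 → ℝ) : ‖toE3 x‖ ≤ Real.sqrt 3 * ‖x‖ := by
  rw [norm_toE3_eq, ← Real.sqrt_sq (norm_nonneg x), ← Real.sqrt_mul (by norm_num)]
  apply Real.sqrt_le_sqrt
  have h0 := norm_le_pi_norm x 0
  have h1 := norm_le_pi_norm x 1
  have h2 := norm_le_pi_norm x 2
  simp only [Real.norm_eq_abs] at h0 h1 h2
  nlinarith [abs_nonneg (x 0), abs_nonneg (x 1), abs_nonneg (x 2), sq_abs (x 0), sq_abs (x 1),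
    sq_abs (x 2), norm_nonneg x]

noncomputable def rotM (φ : ℝ) : Matrix (Fin 3) (Fin 3) ℝ :=
  !![Real.cos φ, Real.sin φ, 0; -Real.sin φ, Real.cos φ, 0; 0, 0, 1]

lemma rotM_mul (φ ψ : ℝ) : rotM φ * rotM ψ = rotM (φ + ψ) := by
  ext i j
  fin_cases i <;> fin_cases j <;>
    simp [rotM, Matrix.mul_apply, Fin.sum_univ_three, Real.cos_add, Real.sin_add] <;> ring

lemma rotM_zero : rotM 0 = 1 := by
  ext i j
  fin_cases i <;> fin_cases j <;> simp [rotM, Matrix.one_apply, Matrix.vecHead, Matrix.vecTail]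

lemma rotM_pow (φ : ℝ) (n : ℕ) : rotM φ ^ n = rotM (n * φ) := by
  induction n with
  | zero => simp [rotM_zero]
  | succ m ih =>
    rw [pow_succ, ih, rotM_mul]
    push_cast
    ring_nf

lemma rotM_two_pi : rotM (2 * Real.pi) = 1 := by
  have h : rotM (2 * Real.pi) = rotM 0 := by
    unfold rotM
    rw [Real.cos_two_pi, Real.sin_two_pi, Real.cos_zero, Real.sin_zero]
  rw [h, rotM_zero]

lemma rotM_mulVec_apply (φ : ℝ) (x : Fin 3 → ℝ) :
    (rotM φ).mulVec x = ![Real.cos φ * x 0 + Real.sin φ * x 1,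
      -Real.sin φ * x 0 + Real.cos φ * x 1, x 2] := by
  funext i
  fin_cases i <;>
    simp [rotM, Matrix.mulVec, dotProduct, Fin.sum_univ_three, Matrix.vecHead, Matrix.vecTail]

lemma norm_toE3_rotM (φ : ℝ) (x : Fin 3 → ℝ) :
    ‖toE3 ((rotM φ).mulVec x)‖ = ‖toE3 x‖ := by
  rw [norm_toE3_eq, norm_toE3_eq, rotM_mulVec_apply]
  congr 1
  simp only [Matrix.cons_val_zero, Matrix.cons_val_one, Matrix.head_cons,
    Matrix.cons_val_two, Matrix.tail_cons]
  have h := Real.sin_sq_add_cos_sq φ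
  nlinarith [h]

lemma rotM_fixed_axis (φ : ℝ) (hφ : Real.cos φ < 1) (x : Fin 3 → ℝ)
    (h : (rotM φ).mulVec x = x) : x 0 = 0 ∧ x 1 = 0 := by
  rw [rotM_mulVec_apply] at h
  have h0 := congrFun h 0
  have h1 := congrFun h 1
  simp only [Matrix.cons_val_zero, Matrix.cons_val_one, Matrix.head_cons] at h0 h1
  have hs := Real.sin_sq_add_cos_sq φ
  have hpos : 0 < 2 - 2 * Real.cos φ := by linarith
  have k0 : (2 - 2 * Real.cos φ) * x 0 = 0 := by
    linear_combination (Real.cos φ - 1) * h0 - Real.sin φ * h1 - x 0 * hs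
  have k1 : (2 - 2 * Real.cos φ) * x 1 = 0 := by
    linear_combination Real.sin φ * h0 + (Real.cos φ - 1) * h1 - x 1 * hs
  constructor
  · rcases mul_eq_zero.mp k0 with h' | h'
    · linarith
    · exact h'
  · rcases mul_eq_zero.mp k1 with h' | h'
    · linarith
    · exact h'

lemma sum_shift {V : Type*} [AddCommGroup V] (r : ℕ) (T : ℕ → V) (h : T r = T 0) :
    ∑ j ∈ Finset.range r, T (j + 1) = ∑ j ∈ Finset.range r, T j := by
  have h1 := Finset.sum_range_succ' T r
  have h2 := Finset.sum_range_succ T r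
  have h3 := h1.symm.trans h2
  rw [h] at h3
  exact add_right_cancel h3

lemma grav_diff_le {E : Type*} [NormedAddCommGroup E] [NormedSpace ℝ E]
    (x y : E) (d : ℝ) (hd : 0 < d) (hx : d ≤ ‖x‖) (hy : d ≤ ‖y‖) :
    ‖(‖x‖ ^ 3)⁻¹ • x - (‖y‖ ^ 3)⁻¹ • y‖ ≤ 4 / d ^ 3 * ‖x - y‖ := by
  set u := ‖x‖ with hu'
  set v := ‖y‖ with hv'
  have hu : 0 < u := hd.trans_le hx
  have hv : 0 < v := hd.trans_le hy
  have hN : (0:ℝ) ≤ ‖x - y‖ := norm_nonneg _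
  have hsum : (0:ℝ) ≤ v ^ 2 + u * v + u ^ 2 := by nlinarith
  have hrw : (u ^ 3)⁻¹ • x - (v ^ 3)⁻¹ • y
      = (u ^ 3)⁻¹ • (x - y) + ((u ^ 3)⁻¹ - (v ^ 3)⁻¹) • y := by
    rw [smul_sub, sub_smul]; abel
  rw [hrw]
  have h1 : ‖(u ^ 3)⁻¹ • (x - y)‖ = (u ^ 3)⁻¹ * ‖x - y‖ := by
    rw [norm_smul, Real.norm_eq_abs, abs_of_pos (by positivity)]
  have h2 : ‖((u ^ 3)⁻¹ - (v ^ 3)⁻¹) • y‖ = |(u ^ 3)⁻¹ - (v ^ 3)⁻¹| * v := by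
    rw [norm_smul, Real.norm_eq_abs]
  have h3 : (u ^ 3)⁻¹ - (v ^ 3)⁻¹ = (v ^ 3 - u ^ 3) / (u ^ 3 * v ^ 3) := by
    field_simp
  have h4 : |v ^ 3 - u ^ 3| ≤ ‖x - y‖ * (v ^ 2 + u * v + u ^ 2) := by
    have hvu : |v - u| ≤ ‖x - y‖ := by
      rw [abs_sub_comm, hu', hv']
      exact abs_norm_sub_norm_le x y
    have hfac : v ^ 3 - u ^ 3 = (v - u) * (v ^ 2 + u * v + u ^ 2) := by ring
    rw [hfac, abs_mul, abs_of_nonneg hsum]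
    exact mul_le_mul_of_nonneg_right hvu hsum
  have hkey : (v ^ 2 + u * v + u ^ 2) * v * d ^ 3 ≤ 3 * (u ^ 3 * v ^ 3) := by
    rcases le_total u v with hc | hc
    · have hdu : d ^ 3 ≤ u ^ 3 := pow_le_pow_left₀ hd.le hx 3
      have s1 : v ^ 2 + u * v + u ^ 2 ≤ 3 * v ^ 2 := by nlinarith
      calc (v ^ 2 + u * v + u ^ 2) * v * d ^ 3 ≤ 3 * v ^ 2 * v * d ^ 3 := by
            apply mul_le_mul_of_nonneg_right
              (mul_le_mul_of_nonneg_right s1 hv.le) (by positivity)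
        _ = 3 * v ^ 3 * d ^ 3 := by ring
        _ ≤ 3 * v ^ 3 * u ^ 3 := mul_le_mul_of_nonneg_left hdu (by positivity)
        _ = 3 * (u ^ 3 * v ^ 3) := by ring
    · have hdu : d ^ 3 ≤ u * v ^ 2 := by
        calc d ^ 3 = d * d ^ 2 := by ring
          _ ≤ u * v ^ 2 := mul_le_mul hx (pow_le_pow_left₀ hd.le hy 2) (by positivity) hu.le
      have s1 : v ^ 2 + u * v + u ^ 2 ≤ 3 * u ^ 2 := by nlinarith
      calc (v ^ 2 + u * v + u ^ 2) * v * d ^ 3 ≤ 3 * u ^ 2 * v * d ^ 3 := by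
            have : (v ^ 2 + u * v + u ^ 2) * v ≤ 3 * u ^ 2 * v :=
              mul_le_mul_of_nonneg_right s1 hv.le
            exact mul_le_mul_of_nonneg_right this (by positivity)
        _ ≤ 3 * u ^ 2 * v * (u * v ^ 2) := mul_le_mul_of_nonneg_left hdu (by positivity)
        _ = 3 * (u ^ 3 * v ^ 3) := by ring
  have h5 : |(u ^ 3)⁻¹ - (v ^ 3)⁻¹| * v ≤ ‖x - y‖ * (3 / d ^ 3) := by
    rw [h3, abs_div, abs_of_pos (by positivity : (0:ℝ) < u ^ 3 * v ^ 3),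
      div_mul_eq_mul_div, div_le_iff₀ (by positivity)]
    calc |v ^ 3 - u ^ 3| * v ≤ ‖x - y‖ * (v ^ 2 + u * v + u ^ 2) * v :=
          mul_le_mul_of_nonneg_right h4 hv.le
      _ ≤ ‖x - y‖ * (3 / d ^ 3) * (u ^ 3 * v ^ 3) := by
          rw [show ‖x - y‖ * (3 / d ^ 3) * (u ^ 3 * v ^ 3)
              = ‖x - y‖ * (3 * (u ^ 3 * v ^ 3) / d ^ 3) by ring]
          rw [show ‖x - y‖ * (v ^ 2 + u * v + u ^ 2) * v
              = ‖x - y‖ * ((v ^ 2 + u * v + u ^ 2) * v) by ring]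
          apply mul_le_mul_of_nonneg_left _ hN
          rw [le_div_iff₀ (by positivity)]
          linarith [hkey]
  calc ‖(u ^ 3)⁻¹ • (x - y) + ((u ^ 3)⁻¹ - (v ^ 3)⁻¹) • y‖
      ≤ ‖(u ^ 3)⁻¹ • (x - y)‖ + ‖((u ^ 3)⁻¹ - (v ^ 3)⁻¹) • y‖ := norm_add_le _ _
    _ ≤ (u ^ 3)⁻¹ * ‖x - y‖ + ‖x - y‖ * (3 / d ^ 3) := by rw [h1, h2]; linarith
    _ ≤ 4 / d ^ 3 * ‖x - y‖ := by
        have hud : (u ^ 3)⁻¹ ≤ (d ^ 3)⁻¹ := by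
          apply inv_anti₀ (by positivity)
          exact pow_le_pow_left₀ hd.le hx 3
        have h6 := mul_le_mul_of_nonneg_right hud hN
        have e : 4 / d ^ 3 * ‖x - y‖
            = (d ^ 3)⁻¹ * ‖x - y‖ + ‖x - y‖ * (3 / d ^ 3) := by
          field_simp; ring
        rw [e]
        linarith

noncomputable def Phi (R : Matrix (Fin 3) (Fin 3) ℝ) (r s : ℕ)
    (c : Fin s → ℝ → (Fin 3 → ℝ)) (mh : Fin s → ℝ) (mI : ℝ)
    (t : ℝ) (x : Fin 3 → ℝ) : Fin 3 → ℝ :=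
  -(mI • ∑ k : Fin s, ∑ j ∈ Finset.range r,
      mh k • ((‖toE3 (x - (R ^ j).mulVec (c k t))‖ ^ 3)⁻¹ • (x - (R ^ j).mulVec (c k t))))

lemma Phi_symm {R : Matrix (Fin 3) (Fin 3) ℝ} {r : ℕ} (hRr : R ^ r = 1)
    (hnorm : ∀ z, ‖toE3 (R.mulVec z)‖ = ‖toE3 z‖)
    {s : ℕ} (c : Fin s → ℝ → (Fin 3 → ℝ)) (mh : Fin s → ℝ) (mI : ℝ)
    (t : ℝ) (x : Fin 3 → ℝ) :
    R.mulVec (Phi R r s c mh mI t x) = Phi R r s c mh mI t (R.mulVec x) := by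
  have hcoef : ∀ (k : Fin s) (j : ℕ), ‖toE3 (x - (R ^ j).mulVec (c k t))‖
      = ‖toE3 (R.mulVec x - (R ^ (j + 1)).mulVec (c k t))‖ := by
    intro k j
    rw [← hnorm (x - (R ^ j).mulVec (c k t)), Matrix.mulVec_sub, Matrix.mulVec_mulVec,
      ← pow_succ']
  simp only [Phi, ← Matrix.mulVecLin_apply, map_neg, map_smul, map_sum, map_sub]
  simp only [Matrix.mulVecLin_apply, Matrix.mulVec_mulVec, ← pow_succ']
  refine congrArg Neg.neg (congrArg (mI • ·) (Finset.sum_congr rfl fun k _ => ?_))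
  have hstep : ∀ j ∈ Finset.range r,
      mh k • ((‖toE3 (x - (R ^ j).mulVec (c k t))‖ ^ 3)⁻¹ •
        (R.mulVec x - (R ^ (j + 1)).mulVec (c k t)))
      = mh k • ((‖toE3 (R.mulVec x - (R ^ (j + 1)).mulVec (c k t))‖ ^ 3)⁻¹ •
        (R.mulVec x - (R ^ (j + 1)).mulVec (c k t))) := by
    intro j _
    rw [hcoef k j]
  rw [Finset.sum_congr rfl hstep]
  exact sum_shift r (fun i => mh k • ((‖toE3 (R.mulVec x - (R ^ i).mulVec (c k t))‖ ^ 3)⁻¹ •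
    (R.mulVec x - (R ^ i).mulVec (c k t)))) (by show mh k • _ = mh k • _; rw [hRr, pow_zero])

/-- Invariance of the axis for the restricted body: if the infinitesimal body of the
restricted N+1 body problem with R-symmetric primaries starts on the vertical axis with
vertical momentum, then it evolves in rectilinear motion on that axis. -/
theorem stmt9 (r : ℕ) (hr : 2 ≤ r) (θ : ℝ) (hθ : θ = 2 * Real.pi / r)
    (R : Matrix (Fin 3) (Fin 3) ℝ)
    (hR : R = !![Real.cos θ, Real.sin θ, 0;
                 -Real.sin θ, Real.cos θ, 0;
                 0, 0, 1])
    (a b : ℝ) (s : ℕ) (c : Fin s → ℝ → (Fin 3 → ℝ))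
    (hc : ∀ k, ContinuousOn (c k) (Set.Ioo a b))
    (mh : Fin s → ℝ) (hmh : ∀ k, 0 < mh k)
    (mI : ℝ) (hmI : 0 < mI)
    (q p : ℝ → (Fin 3 → ℝ))
    (hsep : ∀ t ∈ Set.Ioo a b, ∀ k : Fin s, ∀ j ∈ Finset.range r,
      q t ≠ (R ^ j).mulVec (c k t))
    (hq : ∀ t ∈ Set.Ioo a b, HasDerivAt q (mI⁻¹ • p t) t)
    (hp : ∀ t ∈ Set.Ioo a b, HasDerivAt p
      (-(mI • ∑ k : Fin s, ∑ j ∈ Finset.range r,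
        mh k • ((‖toE3 (q t - (R ^ j).mulVec (c k t))‖ ^ 3)⁻¹ •
          (q t - (R ^ j).mulVec (c k t))))) t)
    (t₀ : ℝ) (ht₀ : t₀ ∈ Set.Ioo a b) (z₀ w₀ : ℝ)
    (hq0 : q t₀ = ![0, 0, z₀]) (hp0 : p t₀ = ![0, 0, w₀]) :
    ∀ t ∈ Set.Ioo a b, q t 0 = 0 ∧ q t 1 = 0 ∧ p t 0 = 0 ∧ p t 1 = 0 := by
  have hrpos : (0:ℝ) < (r:ℝ) := by
    exact_mod_cast Nat.lt_of_lt_of_le Nat.zero_lt_two hr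
  have hRrot : R = rotM θ := by rw [hR]; rfl
  have hRr : R ^ r = 1 := by
    rw [hRrot, rotM_pow, hθ, mul_div_cancel₀ _ (ne_of_gt hrpos), rotM_two_pi]
  have hnorm : ∀ z, ‖toE3 (R.mulVec z)‖ = ‖toE3 z‖ := by
    intro z; rw [hRrot]; exact norm_toE3_rotM θ z
  have hcosθ : Real.cos θ < 1 := by
    have hθpos : 0 < θ := by rw [hθ]; positivity
    have hθle : θ ≤ Real.pi := by
      rw [hθ, div_le_iff₀ hrpos]
      have h2r : (2:ℝ) ≤ (r:ℝ) := by exact_mod_cast hr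
      nlinarith [Real.pi_pos]
    calc Real.cos θ < Real.cos 0 := Real.cos_lt_cos_of_nonneg_of_le_pi le_rfl hθle hθpos
      _ = 1 := Real.cos_zero
  -- linear map for mulVec by R
  let L : (Fin 3 → ℝ) →L[ℝ] (Fin 3 → ℝ) := LinearMap.toContinuousLinearMap (Matrix.mulVecLin R)
  have hL : ∀ z, L z = R.mulVec z := fun z => rfl
  -- shorthand for the force and the full field
  set Φ : ℝ → (Fin 3 → ℝ) → (Fin 3 → ℝ) := Phi R r s c mh mI with hΦ
  have hp' : ∀ t ∈ Set.Ioo a b, HasDerivAt p (Φ t (q t)) t := hp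
  set F : ℝ → (Fin 3 → ℝ) × (Fin 3 → ℝ) → (Fin 3 → ℝ) × (Fin 3 → ℝ) :=
    fun t x => (mI⁻¹ • x.2, Φ t x.1) with hF
  set g : ℝ → (Fin 3 → ℝ) × (Fin 3 → ℝ) := fun t => (q t, p t) with hg
  set g2 : ℝ → (Fin 3 → ℝ) × (Fin 3 → ℝ) := fun t => (R.mulVec (q t), R.mulVec (p t)) with hg2
  have hgder : ∀ t ∈ Set.Ioo a b, HasDerivAt g (F t (g t)) t :=
    fun t ht => (hq t ht).prodMk (hp' t ht)
  have hg2der : ∀ t ∈ Set.Ioo a b, HasDerivAt g2 (F t (g2 t)) t := by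
    intro t ht
    have h1 : HasDerivAt (fun τ => R.mulVec (q τ)) (R.mulVec (mI⁻¹ • p t)) t :=
      L.hasFDerivAt.comp_hasDerivAt t (hq t ht)
    have h2 : HasDerivAt (fun τ => R.mulVec (p τ)) (R.mulVec (Φ t (q t))) t :=
      L.hasFDerivAt.comp_hasDerivAt t (hp' t ht)
    have e1 : R.mulVec (mI⁻¹ • p t) = mI⁻¹ • R.mulVec (p t) := Matrix.mulVec_smul R mI⁻¹ (p t)
    have e2 : R.mulVec (Φ t (q t)) = Φ t (R.mulVec (q t)) := Phi_symm hRr hnorm c mh mI t (q t)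
    rw [e1] at h1
    rw [e2] at h2
    exact h1.prodMk h2
  -- initial condition: the initial state is fixed by the rotation
  have hinit : g t₀ = g2 t₀ := by
    have hfix : ∀ z₁ : ℝ, R.mulVec ![0, 0, z₁] = ![0, 0, z₁] := by
      intro z₁
      rw [hRrot, rotM_mulVec_apply]
      norm_num
      rfl
    simp only [hg, hg2, hq0, hp0, hfix]
  -- main step: g = g2 on all of (a, b), via ODE uniqueness on compact subintervals
  have hmain : ∀ t₁ ∈ Set.Ioo a b, g t₁ = g2 t₁ := by
    intro t₁ ht₁
    set α : ℝ := (a + min t₀ t₁) / 2 with hα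
    set β : ℝ := (max t₀ t₁ + b) / 2 with hβ
    have haα : a < α := by
      simp only [hα]
      cases' le_total t₀ t₁ with h h <;> simp [min_def, h] <;> linarith [ht₀.1, ht₁.1]
    have hαmin : α < min t₀ t₁ := by
      simp only [hα]
      cases' le_total t₀ t₁ with h h <;> simp [min_def, h] <;> linarith [ht₀.1, ht₁.1]
    have hmaxβ : max t₀ t₁ < β := by
      simp only [hβ]
      cases' le_total t₀ t₁ with h h <;> simp [max_def, h] <;> linarith [ht₀.2, ht₁.2]
    have hβb : β < b := by
      simp only [hβ]
      cases' le_total t₀ t₁ with h h <;> simp [max_def, h] <;> linarith [ht₀.2, ht₁.2]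
    have hαβ : α ≤ β := by
      have := (hαmin.trans_le (min_le_left t₀ t₁)).trans_le (le_max_left t₀ t₁)
      linarith [hmaxβ]
    have hsub : Set.Icc α β ⊆ Set.Ioo a b := by
      intro t ht
      exact ⟨haα.trans_le ht.1, lt_of_le_of_lt ht.2 hβb⟩
    have ht₀' : t₀ ∈ Set.Ioo α β :=
      ⟨hαmin.trans_le (min_le_left t₀ t₁), lt_of_le_of_lt (le_max_left t₀ t₁) hmaxβ⟩
    have ht₁' : t₁ ∈ Set.Icc α β :=
      ⟨(hαmin.trans_le (min_le_right t₀ t₁)).le, (lt_of_le_of_lt (le_max_right t₀ t₁) hmaxβ).le⟩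
    -- continuity
    have hqc : ContinuousOn q (Set.Icc α β) :=
      fun t ht => ((hq t (hsub ht)).continuousAt).continuousWithinAt
    have hpc : ContinuousOn p (Set.Icc α β) :=
      fun t ht => ((hp' t (hsub ht)).continuousAt).continuousWithinAt
    have hgc : ContinuousOn g (Set.Icc α β) := hqc.prodMk hpc
    have hg2c : ContinuousOn g2 (Set.Icc α β) :=
      (L.continuous.comp_continuousOn hqc).prodMk (L.continuous.comp_continuousOn hpc)
    -- uniform lower bound on distances to primaries
    have hsep' : ∀ t ∈ Set.Icc α β, ∀ (k : Fin s), ∀ j < r,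
        0 < ‖toE3 (q t - (R ^ j).mulVec (c k t))‖ := by
      intro t ht k j hj
      rw [norm_pos_iff]
      exact toE3_ne_zero (sub_ne_zero.mpr (hsep t (hsub ht) k j (Finset.mem_range.mpr hj)))
    have hpair : ∀ kj : Fin s × Fin r, ∃ δ > 0, ∀ t ∈ Set.Icc α β,
        δ ≤ ‖toE3 (q t - (R ^ (kj.2 : ℕ)).mulVec (c kj.1 t))‖ := by
      rintro ⟨k, j⟩
      have hcont : ContinuousOn
          (fun t => ‖toE3 (q t - (R ^ (j : ℕ)).mulVec (c k t))‖) (Set.Icc α β) := by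
        apply ContinuousOn.norm
        have hsubc : ContinuousOn (fun t => q t - (R ^ (j : ℕ)).mulVec (c k t)) (Set.Icc α β) :=
          hqc.sub ((LinearMap.toContinuousLinearMap
            (Matrix.mulVecLin (R ^ (j : ℕ)))).continuous.comp_continuousOn
            ((hc k).mono hsub))
        exact (EuclideanSpace.equiv (Fin 3) ℝ).symm.continuous.comp_continuousOn hsubc
      obtain ⟨t', ht', hmin⟩ := isCompact_Icc.exists_isMinOn
        (Set.nonempty_Icc.mpr hαβ) hcont
      exact ⟨_, hsep' t' ht' k (j : ℕ) j.2, fun t ht => hmin ht⟩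
    obtain ⟨δ, hδpos, hδ⟩ : ∃ δ > 0, ∀ t ∈ Set.Icc α β, ∀ (k : Fin s), ∀ j < r,
        δ ≤ ‖toE3 (q t - (R ^ j).mulVec (c k t))‖ := by
      rcases isEmpty_or_nonempty (Fin s × Fin r) with he | hne
      · exact ⟨1, one_pos, fun t ht k j hj => (he.false (⟨k, ⟨j, hj⟩⟩ : Fin s × Fin r)).elim⟩
      · choose δf hδfpos hδf using hpair
        obtain ⟨kj₀, _, hkj₀⟩ := Finset.exists_min_image Finset.univ δf
          ⟨Classical.arbitrary _, Finset.mem_univ _⟩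
        refine ⟨δf kj₀, hδfpos kj₀, fun t ht k j hj => ?_⟩
        exact (hkj₀ ⟨k, ⟨j, hj⟩⟩ (Finset.mem_univ _)).trans (hδf ⟨k, ⟨j, hj⟩⟩ t ht)
    -- same bound for the rotated trajectory
    have hδ2 : ∀ t ∈ Set.Icc α β, ∀ (k : Fin s), ∀ j < r,
        δ ≤ ‖toE3 (R.mulVec (q t) - (R ^ j).mulVec (c k t))‖ := by
      intro t ht k j hj
      rcases j with _ | m
      · have e : R.mulVec (q t - (R ^ (r - 1)).mulVec (c k t))
            = R.mulVec (q t) - (R ^ 0).mulVec (c k t) := by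
          rw [Matrix.mulVec_sub, Matrix.mulVec_mulVec, ← pow_succ']
          rw [show r - 1 + 1 = r by omega, hRr, pow_zero]
        rw [← e, hnorm]
        exact hδ t ht k (r - 1) (by omega)
      · have e : R.mulVec (q t - (R ^ m).mulVec (c k t))
            = R.mulVec (q t) - (R ^ (m + 1)).mulVec (c k t) := by
          rw [Matrix.mulVec_sub, Matrix.mulVec_mulVec, ← pow_succ']
        rw [← e, hnorm]
        exact hδ t ht k m (by omega)
    -- the Lipschitz constant
    set M : ℝ := ∑ k : Fin s, mh k with hM
    have hMnn : 0 ≤ M := Finset.sum_nonneg fun k _ => (hmh k).le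
    set Creal : ℝ := mI * ((r : ℝ) * M) * (4 / δ ^ 3) * Real.sqrt 3 with hC
    have hCnn : 0 ≤ Creal := by positivity
    set K : NNReal := Real.toNNReal (max mI⁻¹ Creal) with hK
    have hKval : (K : ℝ) = max mI⁻¹ Creal :=
      Real.coe_toNNReal _ (le_max_of_le_left (by positivity))
    -- the two-point Lipschitz estimate
    have hFlip : ∀ t ∈ Set.Icc α β,
        dist (F t (g t)) (F t (g2 t)) ≤ (K : ℝ) * dist (g t) (g2 t) := by
      intro t ht
      set D := dist (g t) (g2 t) with hD
      have hDnn : 0 ≤ D := dist_nonneg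
      have hD1 : dist (q t) (R.mulVec (q t)) ≤ D := by
        rw [hD, hg, hg2, Prod.dist_eq]
        exact le_max_left _ _
      have hD2 : dist (p t) (R.mulVec (p t)) ≤ D := by
        rw [hD, hg, hg2, Prod.dist_eq]
        exact le_max_right _ _
      rw [Prod.dist_eq]
      apply max_le
      · -- first components
        have : dist (mI⁻¹ • p t) (mI⁻¹ • R.mulVec (p t)) = mI⁻¹ * dist (p t) (R.mulVec (p t)) := by
          rw [dist_smul₀, Real.norm_eq_abs, abs_of_pos (by positivity)]
        calc dist ((F t (g t)).1) ((F t (g2 t)).1)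
            = mI⁻¹ * dist (p t) (R.mulVec (p t)) := this
          _ ≤ mI⁻¹ * D := by
              exact mul_le_mul_of_nonneg_left hD2 (by positivity)
          _ ≤ (K : ℝ) * D := by
              apply mul_le_mul_of_nonneg_right _ hDnn
              rw [hKval]; exact le_max_left _ _
      · -- second components: the force difference
        have hterm : ∀ (k : Fin s), ∀ j ∈ Finset.range r,
            ‖((‖toE3 (q t - (R ^ j).mulVec (c k t))‖ ^ 3)⁻¹ • (q t - (R ^ j).mulVec (c k t)))
              - ((‖toE3 (R.mulVec (q t) - (R ^ j).mulVec (c k t))‖ ^ 3)⁻¹ •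
                  (R.mulVec (q t) - (R ^ j).mulVec (c k t)))‖
            ≤ 4 / δ ^ 3 * (Real.sqrt 3 * D) := by
          intro k j hj
          have hj' := Finset.mem_range.mp hj
          set x := toE3 (q t - (R ^ j).mulVec (c k t)) with hx
          set y := toE3 (R.mulVec (q t) - (R ^ j).mulVec (c k t)) with hy
          have hxb : δ ≤ ‖x‖ := hδ t ht k j hj'
          have hyb : δ ≤ ‖y‖ := hδ2 t ht k j hj'
          have key := grav_diff_le x y δ hδpos hxb hyb
          have heq : toE3 (((‖x‖ ^ 3)⁻¹ • (q t - (R ^ j).mulVec (c k t)))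
              - ((‖y‖ ^ 3)⁻¹ • (R.mulVec (q t) - (R ^ j).mulVec (c k t))))
              = (‖x‖ ^ 3)⁻¹ • x - (‖y‖ ^ 3)⁻¹ • y := by
            rw [toE3_sub, toE3_smul, toE3_smul, hx, hy]
          have hxy : x - y = toE3 (q t - R.mulVec (q t)) := by
            rw [hx, hy, ← toE3_sub]
            congr 1
            abel
          calc ‖((‖x‖ ^ 3)⁻¹ • (q t - (R ^ j).mulVec (c k t)))
              - ((‖y‖ ^ 3)⁻¹ • (R.mulVec (q t) - (R ^ j).mulVec (c k t)))‖
              ≤ ‖toE3 (((‖x‖ ^ 3)⁻¹ • (q t - (R ^ j).mulVec (c k t)))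
                - ((‖y‖ ^ 3)⁻¹ • (R.mulVec (q t) - (R ^ j).mulVec (c k t))))‖ :=
                pi_norm_le_toE3 _
            _ = ‖(‖x‖ ^ 3)⁻¹ • x - (‖y‖ ^ 3)⁻¹ • y‖ := by rw [heq]
            _ ≤ 4 / δ ^ 3 * ‖x - y‖ := key
            _ ≤ 4 / δ ^ 3 * (Real.sqrt 3 * D) := by
                apply mul_le_mul_of_nonneg_left _ (by positivity)
                rw [hxy]
                calc ‖toE3 (q t - R.mulVec (q t))‖
                    ≤ Real.sqrt 3 * ‖q t - R.mulVec (q t)‖ := toE3_le_sqrt3 _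
                  _ ≤ Real.sqrt 3 * D := by
                      apply mul_le_mul_of_nonneg_left _ (Real.sqrt_nonneg 3)
                      rw [← dist_eq_norm]
                      exact hD1
        -- assemble the sum bound
        have hsumdiff : dist ((F t (g t)).2) ((F t (g2 t)).2) ≤ Creal * D := by
          set Sq := ∑ k : Fin s, ∑ j ∈ Finset.range r,
            mh k • ((‖toE3 (q t - (R ^ j).mulVec (c k t))‖ ^ 3)⁻¹ •
              (q t - (R ^ j).mulVec (c k t))) with hSq
          set SR := ∑ k : Fin s, ∑ j ∈ Finset.range r,
            mh k • ((‖toE3 (R.mulVec (q t) - (R ^ j).mulVec (c k t))‖ ^ 3)⁻¹ •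
              (R.mulVec (q t) - (R ^ j).mulVec (c k t))) with hSR
          have e2 : (F t (g t)).2 = -(mI • Sq) := rfl
          have e3 : (F t (g2 t)).2 = -(mI • SR) := rfl
          rw [dist_eq_norm, e2, e3]
          have e4 : -(mI • Sq) - -(mI • SR) = -(mI • (Sq - SR)) := by
            rw [smul_sub]; abel
          rw [e4, norm_neg, norm_smul, Real.norm_eq_abs, abs_of_pos hmI]
          have hSdiff : Sq - SR = ∑ k : Fin s, ∑ j ∈ Finset.range r, mh k •
              (((‖toE3 (q t - (R ^ j).mulVec (c k t))‖ ^ 3)⁻¹ •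
                  (q t - (R ^ j).mulVec (c k t)))
                - ((‖toE3 (R.mulVec (q t) - (R ^ j).mulVec (c k t))‖ ^ 3)⁻¹ •
                  (R.mulVec (q t) - (R ^ j).mulVec (c k t)))) := by
            rw [hSq, hSR, ← Finset.sum_sub_distrib]
            refine Finset.sum_congr rfl fun k _ => ?_
            rw [← Finset.sum_sub_distrib]
            exact Finset.sum_congr rfl fun j _ => (smul_sub _ _ _).symm
          have hnormS : ‖Sq - SR‖ ≤ (r : ℝ) * M * (4 / δ ^ 3 * (Real.sqrt 3 * D)) := by
            rw [hSdiff]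
            calc ‖∑ k : Fin s, ∑ j ∈ Finset.range r, mh k •
                (((‖toE3 (q t - (R ^ j).mulVec (c k t))‖ ^ 3)⁻¹ •
                    (q t - (R ^ j).mulVec (c k t)))
                  - ((‖toE3 (R.mulVec (q t) - (R ^ j).mulVec (c k t))‖ ^ 3)⁻¹ •
                    (R.mulVec (q t) - (R ^ j).mulVec (c k t))))‖
                ≤ ∑ k : Fin s, ‖∑ j ∈ Finset.range r, mh k •
                  (((‖toE3 (q t - (R ^ j).mulVec (c k t))‖ ^ 3)⁻¹ •
                      (q t - (R ^ j).mulVec (c k t)))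
                    - ((‖toE3 (R.mulVec (q t) - (R ^ j).mulVec (c k t))‖ ^ 3)⁻¹ •
                      (R.mulVec (q t) - (R ^ j).mulVec (c k t))))‖ := norm_sum_le _ _
              _ ≤ ∑ k : Fin s, ∑ j ∈ Finset.range r, mh k * (4 / δ ^ 3 * (Real.sqrt 3 * D)) := by
                  apply Finset.sum_le_sum
                  intro k _
                  calc ‖∑ j ∈ Finset.range r, mh k •
                      (((‖toE3 (q t - (R ^ j).mulVec (c k t))‖ ^ 3)⁻¹ •
                          (q t - (R ^ j).mulVec (c k t)))
                        - ((‖toE3 (R.mulVec (q t) - (R ^ j).mulVec (c k t))‖ ^ 3)⁻¹ •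
                          (R.mulVec (q t) - (R ^ j).mulVec (c k t))))‖
                      ≤ ∑ j ∈ Finset.range r, ‖mh k •
                        (((‖toE3 (q t - (R ^ j).mulVec (c k t))‖ ^ 3)⁻¹ •
                            (q t - (R ^ j).mulVec (c k t)))
                          - ((‖toE3 (R.mulVec (q t) - (R ^ j).mulVec (c k t))‖ ^ 3)⁻¹ •
                            (R.mulVec (q t) - (R ^ j).mulVec (c k t))))‖ := norm_sum_le _ _
                    _ ≤ ∑ j ∈ Finset.range r, mh k * (4 / δ ^ 3 * (Real.sqrt 3 * D)) := by
                        apply Finset.sum_le_sum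
                        intro j hj
                        rw [norm_smul, Real.norm_eq_abs, abs_of_pos (hmh k)]
                        exact mul_le_mul_of_nonneg_left (hterm k j hj) (hmh k).le
              _ = (r : ℝ) * M * (4 / δ ^ 3 * (Real.sqrt 3 * D)) := by
                  simp only [Finset.sum_const, Finset.card_range, nsmul_eq_mul]
                  calc ∑ x : Fin s, (r : ℝ) * (mh x * (4 / δ ^ 3 * (Real.sqrt 3 * D)))
                      = ∑ x : Fin s, mh x * ((r : ℝ) * (4 / δ ^ 3 * (Real.sqrt 3 * D))) :=
                        Finset.sum_congr rfl fun x _ => by ring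
                    _ = M * ((r : ℝ) * (4 / δ ^ 3 * (Real.sqrt 3 * D))) := by
                        rw [hM, Finset.sum_mul]
                    _ = (r : ℝ) * M * (4 / δ ^ 3 * (Real.sqrt 3 * D)) := by ring
          calc mI * ‖Sq - SR‖ ≤ mI * ((r : ℝ) * M * (4 / δ ^ 3 * (Real.sqrt 3 * D))) :=
                mul_le_mul_of_nonneg_left hnormS hmI.le
            _ = Creal * D := by rw [hC]; ring
        calc dist ((F t (g t)).2) ((F t (g2 t)).2) ≤ Creal * D := hsumdiff
          _ ≤ (K : ℝ) * D := by
              apply mul_le_mul_of_nonneg_right _ hDnn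
              rw [hKval]; exact le_max_right _ _
    -- package the set and apply uniqueness
    set sset : ℝ → Set ((Fin 3 → ℝ) × (Fin 3 → ℝ)) :=
      fun t => if t ∈ Set.Icc α β then {g t, g2 t} else ∅ with hsset
    have hv : ∀ t, LipschitzOnWith K (F t) (sset t) := by
      intro t
      by_cases h : t ∈ Set.Icc α β
      · simp only [hsset, if_pos h]
        apply LipschitzOnWith.of_dist_le_mul
        intro x hx y hy
        rcases hx with hx | hx <;> rcases hy with hy | hy <;> subst hx <;> subst hy
        · simp
        · exact hFlip t h
        · rw [dist_comm (F t (g2 t)), dist_comm (g2 t)]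
          exact hFlip t h
        · simp
      · simp only [hsset, if_neg h]
        exact lipschitzOnWith_empty K (F t)
    have hmem1 : ∀ t ∈ Set.Ioo α β, g t ∈ sset t := by
      intro t ht
      simp only [hsset, if_pos (Set.Ioo_subset_Icc_self ht)]
      exact Set.mem_insert _ _
    have hmem2 : ∀ t ∈ Set.Ioo α β, g2 t ∈ sset t := by
      intro t ht
      simp only [hsset, if_pos (Set.Ioo_subset_Icc_self ht)]
      exact Set.mem_insert_of_mem _ rfl
    have huniq : Set.EqOn g g2 (Set.Icc α β) :=
      ODE_solution_unique_of_mem_Icc (fun t _ => hv t) ht₀' hgc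
        (fun t ht => hgder t (hsub (Set.Ioo_subset_Icc_self ht))) hmem1 hg2c
        (fun t ht => hg2der t (hsub (Set.Ioo_subset_Icc_self ht))) hmem2 hinit
    exact huniq ht₁'
  -- conclude
  intro t ht
  have heq := (hmain t ht).symm
  have hqe : (rotM θ).mulVec (q t) = q t := by
    rw [← hRrot]
    exact congrArg Prod.fst heq
  have hpe : (rotM θ).mulVec (p t) = p t := by
    rw [← hRrot]
    exact congrArg Prod.snd heq
  obtain ⟨hq1, hq2⟩ := rotM_fixed_axis θ hcosθ (q t) hqe
  obtain ⟨hp1, hp2⟩ := rotM_fixed_axis θ hcosθ (p t) hpe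
  exact ⟨hq1, hq2, hp1, hp2⟩
end

section
/- Fix real numbers ε and P₁, and Q₁ ≠ 0. The Jacobian matrix of the regularizing transformation ρ: (Q₁,Q₂,P₁,P₂) ↦ (q₁,q₂,p₁,p₂) given by q₁ = Q₂ + ((1−ε)/4)Q₁², q₂ = Q₂ − ((1+ε)/4)Q₁², p₁ = ((1+ε)/2)P₂ + P₁/Q₁, p₂ = ((1−ε)/2)P₂ − P₁/Q₁, namely the 4×4 matrix (in coordinates ordered (q₁,q₂,p₁,p₂) as functions of (Q₁,Q₂,P₁,P₂)) with rows (((1−ε)/2)Q₁, 1, 0, 0), (−((1+ε)/2)Q₁, 1, 0, 0), (−P₁/Q₁², 0, 1/Q₁, (1+ε)/2), (P₁/Q₁², 0, −1/Q₁, (1−ε)/2), is symplectic: MᵀJM = J with J = [[0, I₂], [−I₂, 0]]. Hence ρ is a local symplectomorphism on {Q₁ ≠ 0}. -/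
open Matrix

set_option maxHeartbeats 1000000 in
/-- The Jacobian matrix of the regularizing transformation
ρ : (Q₁,Q₂,P₁,P₂) ↦ (q₁,q₂,p₁,p₂) of the circular N+2 Sitnikov problem, namely the 4×4
matrix M with rows (((1−ε)/2)Q₁, 1, 0, 0), (−((1+ε)/2)Q₁, 1, 0, 0),
(−P₁/Q₁², 0, 1/Q₁, (1+ε)/2), (P₁/Q₁², 0, −1/Q₁, (1−ε)/2), is symplectic: MᵀJM = J.
Hence ρ is a local symplectomorphism on {Q₁ ≠ 0}. -/
theorem stmt10 (ε Q₁ Q₂ P₁ P₂ : ℝ) (hQ : Q₁ ≠ 0)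
    (M : Matrix (Fin 4) (Fin 4) ℝ)
    (hM : M = !![(1-ε)/2*Q₁, 1, 0, 0;
                 -((1+ε)/2*Q₁), 1, 0, 0;
                 -(P₁/Q₁^2), 0, 1/Q₁, (1+ε)/2;
                 P₁/Q₁^2, 0, -(1/Q₁), (1-ε)/2])
    (J : Matrix (Fin 4) (Fin 4) ℝ)
    (hJ : J = !![0, 0, 1, 0; 0, 0, 0, 1; -1, 0, 0, 0; 0, -1, 0, 0]) :
    Mᵀ * J * M = J ∧
    HasFDerivAt (fun x : Fin 4 → ℝ =>
        (![x 1 + (1-ε)/4*(x 0)^2,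
           x 1 - (1+ε)/4*(x 0)^2,
           (1+ε)/2*(x 3) + x 2 / x 0,
           (1-ε)/2*(x 3) - x 2 / x 0] : Fin 4 → ℝ))
      (LinearMap.toContinuousLinearMap (Matrix.mulVecLin M))
      ![Q₁, Q₂, P₁, P₂] := by
  constructor
  · subst hM hJ
    ext i j
    fin_cases i <;> fin_cases j <;>
      · simp only [Matrix.mul_apply, Fin.sum_univ_succ, Finset.sum_empty,
          Fin.isValue, Matrix.transpose_apply, Matrix.of_apply,
          Matrix.cons_val_zero, Matrix.cons_val_succ, Fin.succ_zero_eq_one,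
          Fin.succ_one_eq_two, add_zero, Fin.zero_eta, Fin.mk_one, Fin.reduceFinMk, Matrix.cons_val]
        field_simp
        try ring
  · apply hasFDerivAt_pi''
    intro i
    set a : Fin 4 → ℝ := ![Q₁, Q₂, P₁, P₂] with ha
    have h0 : HasFDerivAt (𝕜 := ℝ) (fun x : Fin 4 → ℝ => x 0)
        (ContinuousLinearMap.proj (0 : Fin 4)) a :=
      (ContinuousLinearMap.proj (0 : Fin 4) : (Fin 4 → ℝ) →L[ℝ] ℝ).hasFDerivAt
    have h1 : HasFDerivAt (𝕜 := ℝ) (fun x : Fin 4 → ℝ => x 1)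
        (ContinuousLinearMap.proj (1 : Fin 4)) a :=
      (ContinuousLinearMap.proj (1 : Fin 4) : (Fin 4 → ℝ) →L[ℝ] ℝ).hasFDerivAt
    have h2 : HasFDerivAt (𝕜 := ℝ) (fun x : Fin 4 → ℝ => x 2)
        (ContinuousLinearMap.proj (2 : Fin 4)) a :=
      (ContinuousLinearMap.proj (2 : Fin 4) : (Fin 4 → ℝ) →L[ℝ] ℝ).hasFDerivAt
    have h3 : HasFDerivAt (𝕜 := ℝ) (fun x : Fin 4 → ℝ => x 3)
        (ContinuousLinearMap.proj (3 : Fin 4)) a :=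
      (ContinuousLinearMap.proj (3 : Fin 4) : (Fin 4 → ℝ) →L[ℝ] ℝ).hasFDerivAt
    have ha0 : a 0 = Q₁ := rfl
    have ha2 : a 2 = P₁ := rfl
    have hinv : HasFDerivAt (fun x : Fin 4 → ℝ => (x 0)⁻¹)
        ((-(Q₁^2)⁻¹) • (ContinuousLinearMap.proj (0 : Fin 4) : (Fin 4 → ℝ) →L[ℝ] ℝ)) a := by
      have h := (hasDerivAt_inv (by rw [ha0] at *; exact hQ : a 0 ≠ 0)).comp_hasFDerivAt a h0
      rw [ha0] at h
      exact h
    have hdiv : HasFDerivAt (fun x : Fin 4 → ℝ => x 2 / x 0)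
        (Q₁⁻¹ • (ContinuousLinearMap.proj (2 : Fin 4) : (Fin 4 → ℝ) →L[ℝ] ℝ)
          - (P₁ / Q₁^2) • (ContinuousLinearMap.proj (0 : Fin 4) : (Fin 4 → ℝ) →L[ℝ] ℝ)) a := by
      have h := h2.mul hinv
      have heq : ∀ x : Fin 4 → ℝ, x 2 / x 0 = x 2 * (x 0)⁻¹ := fun x => div_eq_mul_inv _ _
      simp only [heq]
      refine HasFDerivAt.congr_fderiv h ?_
      ext v
      simp [ha0, ha2, smul_eq_mul]
      field_simp
      ring
    fin_cases i
    · have := h1.add ((h0.mul h0).const_mul ((1-ε)/4))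
      convert this using 1
      · funext x
        simp only [Fin.mk_zero, Fin.mk_one, Matrix.cons_val_zero, Matrix.cons_val_one,
          Matrix.head_cons, Pi.add_apply, Pi.sub_apply, Pi.mul_apply]
        ring
      · ext v
        simp [hM, Matrix.mulVec, dotProduct, Fin.sum_univ_four, ha0, smul_eq_mul]
        ring
    · have := h1.sub ((h0.mul h0).const_mul ((1+ε)/4))
      convert this using 1
      · funext x
        simp only [Fin.mk_zero, Fin.mk_one, Matrix.cons_val_zero, Matrix.cons_val_one,
          Matrix.head_cons, Pi.add_apply, Pi.sub_apply, Pi.mul_apply]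
        ring
      · ext v
        simp [hM, Matrix.mulVec, dotProduct, Fin.sum_univ_four, ha0, smul_eq_mul]
        ring
    · have := (h3.const_mul ((1+ε)/2)).add hdiv
      refine HasFDerivAt.congr_fderiv this ?_
      ext v
      simp [hM, Matrix.mulVec, dotProduct, Fin.sum_univ_four, ha0, ha2, smul_eq_mul]
      field_simp
      ring
    · have := (h3.const_mul ((1-ε)/2)).sub hdiv
      refine HasFDerivAt.congr_fderiv this ?_
      ext v
      simp [hM, Matrix.mulVec, dotProduct, Fin.sum_univ_four, ha0, ha2, smul_eq_mul]
      field_simp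
      ring
end

section
/- Let ε ∈ ℝ with ε² ≠ 1, m, h ∈ ℝ, r > 0, and Q₁ ≠ 0, Q₂, P₁, P₂ ∈ ℝ. Define q₁ = Q₂ + ((1−ε)/4)Q₁², q₂ = Q₂ − ((1+ε)/4)Q₁², p₁ = ((1+ε)/2)P₂ + P₁/Q₁, p₂ = ((1−ε)/2)P₂ − P₁/Q₁. Then ((1−ε²)/2)·Q₁² · ( H(q₁,q₂,p₁,p₂) − h ) = (1/2)·( ((1−ε²)/4)·P₂²Q₁² + P₁² ) − ((1−ε²)/2)·Q₁²·[ (1+ε)/√(q₁² + r²) + (1−ε)/√(q₂² + r²) + h ] − m(1−ε²)², where H(q₁,q₂,p₁,p₂) = p₁²/(2(1+ε)) + p₂²/(2(1−ε)) − (1+ε)/√(q₁²+r²) − (1−ε)/√(q₂²+r²) − m(1−ε²)/(q₁−q₂). In particular, the right-hand side (the regularized Hamiltonian Γ) contains no singular term at the binary collision q₁ = q₂ (i.e., at Q₁ = 0). -/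
/-- Regularization identity for the circular N+2 Sitnikov problem: multiplying (H − h) by
the time-rescaling factor ((1−ε²)/2)Q₁² and substituting the regularizing change of
coordinates yields the regularized Hamiltonian Γ, free of singular terms at the binary
collision Q₁ = 0. -/
theorem stmt11 (ε m h r : ℝ) (hε : ε ^ 2 ≠ 1) (hr : 0 < r)
    (Q₁ Q₂ P₁ P₂ : ℝ) (hQ : Q₁ ≠ 0)
    (q₁ q₂ p₁ p₂ : ℝ)
    (hq₁ : q₁ = Q₂ + (1-ε)/4*Q₁^2) (hq₂ : q₂ = Q₂ - (1+ε)/4*Q₁^2)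
    (hp₁ : p₁ = (1+ε)/2*P₂ + P₁/Q₁) (hp₂ : p₂ = (1-ε)/2*P₂ - P₁/Q₁) :
    (1-ε^2)/2 * Q₁^2 *
        (p₁^2/(2*(1+ε)) + p₂^2/(2*(1-ε))
          - (1+ε)/Real.sqrt (q₁^2 + r^2) - (1-ε)/Real.sqrt (q₂^2 + r^2)
          - m*(1-ε^2)/(q₁ - q₂) - h)
      = (1/2) * ((1-ε^2)/4 * P₂^2 * Q₁^2 + P₁^2)
        - (1-ε^2)/2 * Q₁^2 *
            ((1+ε)/Real.sqrt (q₁^2 + r^2) + (1-ε)/Real.sqrt (q₂^2 + r^2) + h)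
        - m * (1-ε^2)^2 := by
  have h1 : (1:ℝ) + ε ≠ 0 := by
    intro hc
    apply hε
    have : ε = -1 := by linarith
    rw [this]; ring
  have h2 : (1:ℝ) - ε ≠ 0 := by
    intro hc
    apply hε
    have : ε = 1 := by linarith
    rw [this]; ring
  have hdiff : q₁ - q₂ = Q₁^2/2 := by rw [hq₁, hq₂]; ring
  have hQ2 : Q₁^2 ≠ 0 := pow_ne_zero 2 hQ
  set A := Real.sqrt (q₁^2 + r^2)
  set B := Real.sqrt (q₂^2 + r^2)
  rw [hp₁, hp₂, hdiff]
  field_simp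
  ring
end

section
/- (General regularization identity for the R-symmetric N+2 problem.) Let L be a finite index set, bₗ ∈ ℝ³ and m̂ₗ > 0 for ℓ ∈ L, let ε ∈ ℝ with ε² ≠ 1, m, h ∈ ℝ, and Q₁ ≠ 0, Q₂, P₁, P₂ ∈ ℝ. Define z₁ = Q₂ + ((1−ε)/4)Q₁², z₂ = Q₂ − ((1+ε)/4)Q₁², p₁ = ((1+ε)/2)P₂ + P₁/Q₁, p₂ = ((1−ε)/2)P₂ − P₁/Q₁, and assume (0,0,zᵢ) ≠ bₗ for all ℓ and i = 1,2. Then ((1−ε²)/2)·Q₁² · ( Ĥ(z₁,z₂,p₁,p₂) − h ) = (1/2)·( ((1−ε²)/4)·P₂²Q₁² + P₁² ) − ((1−ε²)/2)·Q₁²·[ V₁(Q₁,Q₂) + h ] − m(1−ε²)², where Ĥ(z₁,z₂,p₁,p₂) = p₁²/(2(1+ε)) + p₂²/(2(1−ε)) − (1+ε)·Σₗ m̂ₗ/‖(0,0,z₁)−bₗ‖ − (1−ε)·Σₗ m̂ₗ/‖(0,0,z₂)−bₗ‖ − m(1−ε²)/(z₁−z₂), and V₁(Q₁,Q₂) = Σₗ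 m̂ₗ·[ (1+ε)/‖(0,0,z₁)−bₗ‖ + (1−ε)/‖(0,0,z₂)−bₗ‖ ]. In particular the right-hand side is free of singularities due to the binary collision z₁ = z₂. -/
/-- General regularization identity for the R-symmetric N+2 problem: multiplying
(Ĥ − h) by ((1−ε²)/2)Q₁² and substituting the regularizing change of coordinates yields
the regularized Hamiltonian, free of singularities at the binary collision z₁ = z₂. -/
theorem stmt12 {L : Type*} [Fintype L] (b : L → EuclideanSpace ℝ (Fin 3))
    (mh : L → ℝ) (hmh : ∀ ℓ, 0 < mh ℓ)
    (ε m h : ℝ) (hε : ε ^ 2 ≠ 1)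
    (Q₁ Q₂ P₁ P₂ : ℝ) (hQ : Q₁ ≠ 0)
    (z₁ z₂ p₁ p₂ : ℝ)
    (hz₁ : z₁ = Q₂ + (1-ε)/4*Q₁^2) (hz₂ : z₂ = Q₂ - (1+ε)/4*Q₁^2)
    (hp₁ : p₁ = (1+ε)/2*P₂ + P₁/Q₁) (hp₂ : p₂ = (1-ε)/2*P₂ - P₁/Q₁)
    (hb₁ : ∀ ℓ, (EuclideanSpace.equiv (Fin 3) ℝ).symm ![0, 0, z₁] ≠ b ℓ)
    (hb₂ : ∀ ℓ, (EuclideanSpace.equiv (Fin 3) ℝ).symm ![0, 0, z₂] ≠ b ℓ) :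
    (1-ε^2)/2 * Q₁^2 *
        (p₁^2/(2*(1+ε)) + p₂^2/(2*(1-ε))
          - (1+ε) * ∑ ℓ, mh ℓ / ‖(EuclideanSpace.equiv (Fin 3) ℝ).symm ![0, 0, z₁] - b ℓ‖
          - (1-ε) * ∑ ℓ, mh ℓ / ‖(EuclideanSpace.equiv (Fin 3) ℝ).symm ![0, 0, z₂] - b ℓ‖
          - m*(1-ε^2)/(z₁ - z₂) - h)
      = (1/2) * ((1-ε^2)/4 * P₂^2 * Q₁^2 + P₁^2)
        - (1-ε^2)/2 * Q₁^2 *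
            ((∑ ℓ, mh ℓ *
              ((1+ε) / ‖(EuclideanSpace.equiv (Fin 3) ℝ).symm ![0, 0, z₁] - b ℓ‖
                + (1-ε) / ‖(EuclideanSpace.equiv (Fin 3) ℝ).symm ![0, 0, z₂] - b ℓ‖)) + h)
        - m * (1-ε^2)^2 := by
  have h1 : (1:ℝ) + ε ≠ 0 := by
    intro hc; apply hε; nlinarith [sq_nonneg ε]
  have h2 : (1:ℝ) - ε ≠ 0 := by
    intro hc; apply hε; nlinarith [sq_nonneg ε]
  set A := ∑ ℓ, mh ℓ / ‖(EuclideanSpace.equiv (Fin 3) ℝ).symm ![0, 0, z₁] - b ℓ‖ with hA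
  set B := ∑ ℓ, mh ℓ / ‖(EuclideanSpace.equiv (Fin 3) ℝ).symm ![0, 0, z₂] - b ℓ‖ with hB
  have hsum : (∑ ℓ, mh ℓ *
      ((1+ε) / ‖(EuclideanSpace.equiv (Fin 3) ℝ).symm ![0, 0, z₁] - b ℓ‖
        + (1-ε) / ‖(EuclideanSpace.equiv (Fin 3) ℝ).symm ![0, 0, z₂] - b ℓ‖))
      = (1+ε) * A + (1-ε) * B := by
    rw [hA, hB, Finset.mul_sum, Finset.mul_sum, ← Finset.sum_add_distrib]
    apply Finset.sum_congr rfl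
    intro ℓ _
    ring
  rw [hsum]
  have hz : z₁ - z₂ = Q₁^2/2 := by rw [hz₁, hz₂]; ring
  subst hp₁ hp₂
  rw [hz]
  have hQ2 : Q₁^2 ≠ 0 := pow_ne_zero 2 hQ
  field_simp
  ring
end

section
/- (Invariance of the symmetric plane under the regularized flow.) Let r > 0, m, h ∈ ℝ, and Γ₀(Q₁,Q₂,P₁,P₂) = (1/2)·( (1/4)·P₂²Q₁² + P₁² ) − (1/2)·Q₁²·[ 1/√((Q₂ + Q₁²/4)² + r²) + 1/√((Q₂ − Q₁²/4)² + r²) + h ] − m. Let I ⊆ ℝ be an open interval and (Q₁,Q₂,P₁,P₂) : I → ℝ⁴ a differentiable solution of Hamilton's equations Q₁′ = ∂Γ₀/∂P₁, Q₂′ = ∂Γ₀/∂P₂, P₁′ = −∂Γ₀/∂Q₁, P₂′ = −∂Γ₀/∂Q₂ on I. If Q₂(τ₀) = 0 and P₂(τ₀) = 0 for some τ₀ ∈ I, then Q₂(τ) = 0 and P₂(τ) = 0 for all τ ∈ I. -/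
noncomputable def stmt15phi (r x : ℝ) : ℝ := x / (Real.sqrt (x^2 + r^2))^3

lemma stmt15_pos {r : ℝ} (hr : 0 < r) (x : ℝ) : 0 < x^2 + r^2 := by positivity

lemma stmt15_sqrt_pos {r : ℝ} (hr : 0 < r) (x : ℝ) : 0 < Real.sqrt (x^2 + r^2) :=
  Real.sqrt_pos.mpr (stmt15_pos hr x)

lemma stmt15_sqrt_ge {r : ℝ} (hr : 0 < r) (x : ℝ) : r ≤ Real.sqrt (x^2 + r^2) := by
  have : Real.sqrt (r^2) ≤ Real.sqrt (x^2 + r^2) := Real.sqrt_le_sqrt (by nlinarith)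
  rwa [Real.sqrt_sq hr.le] at this

lemma stmt15phi_odd (r x : ℝ) : stmt15phi r (-x) = -(stmt15phi r x) := by
  simp [stmt15phi, neg_pow, neg_div]

lemma stmt15phi_hasDerivAt {r : ℝ} (hr : 0 < r) (x : ℝ) :
    HasDerivAt (stmt15phi r) ((r^2 - 2*x^2) / (Real.sqrt (x^2 + r^2))^5) x := by
  have hpos := stmt15_pos hr x
  have hs := stmt15_sqrt_pos hr x
  have h1 : HasDerivAt (fun y : ℝ => y^2 + r^2) (2*x) x := by
    simpa using ((hasDerivAt_pow 2 x).add_const (r^2))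
  have h2 : HasDerivAt (fun y : ℝ => Real.sqrt (y^2 + r^2)) (2*x / (2 * Real.sqrt (x^2+r^2))) x :=
    h1.sqrt hpos.ne'
  have h3 : HasDerivAt (fun y : ℝ => (Real.sqrt (y^2 + r^2))^3)
      (3 * (Real.sqrt (x^2+r^2))^2 * (2*x / (2 * Real.sqrt (x^2+r^2)))) x := by
    simpa using h2.fun_pow 3
  have h4 : HasDerivAt (fun y : ℝ => ((Real.sqrt (y^2 + r^2))^3)⁻¹)
      (-(3 * (Real.sqrt (x^2+r^2))^2 * (2*x / (2 * Real.sqrt (x^2+r^2)))) /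
        ((Real.sqrt (x^2+r^2))^3)^2) x := h3.inv (by positivity)
  have h5 := (hasDerivAt_id x).mul h4
  have hsq : (Real.sqrt (x^2+r^2))^2 = x^2 + r^2 := Real.sq_sqrt hpos.le
  have : HasDerivAt (fun y : ℝ => y * ((Real.sqrt (y^2 + r^2))^3)⁻¹)
      ((r^2 - 2*x^2) / (Real.sqrt (x^2 + r^2))^5) x := by
    refine HasDerivAt.congr_deriv h5 (Eq.symm ?_)
    have e12 : (Real.sqrt (x^2+r^2))^12 = (Real.sqrt (x^2+r^2))^10 * (x^2+r^2) := by
      calc (Real.sqrt (x^2+r^2))^12 = (Real.sqrt (x^2+r^2))^10 * (Real.sqrt (x^2+r^2))^2 := by ring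
        _ = (Real.sqrt (x^2+r^2))^10 * (x^2+r^2) := by rw [hsq]
    have e10 : (Real.sqrt (x^2+r^2))^10 = (Real.sqrt (x^2+r^2))^8 * (x^2+r^2) := by
      calc (Real.sqrt (x^2+r^2))^10 = (Real.sqrt (x^2+r^2))^8 * (Real.sqrt (x^2+r^2))^2 := by ring
        _ = (Real.sqrt (x^2+r^2))^8 * (x^2+r^2) := by rw [hsq]
    simp only [id]
    field_simp
    linear_combination (-1 : ℝ) * hsq
  unfold stmt15phi
  simpa [div_eq_mul_inv] using this

lemma stmt15phi_deriv_bound {r : ℝ} (hr : 0 < r) (x : ℝ) :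
    |(r^2 - 2*x^2) / (Real.sqrt (x^2 + r^2))^5| ≤ 2 / r^3 := by
  have hpos := stmt15_pos hr x
  have hs := stmt15_sqrt_pos hr x
  have hge := stmt15_sqrt_ge hr x
  have hsq : (Real.sqrt (x^2+r^2))^2 = x^2 + r^2 := Real.sq_sqrt hpos.le
  rw [abs_div, abs_of_pos (show (0:ℝ) < (Real.sqrt (x^2+r^2))^5 by positivity)]
  rw [div_le_div_iff₀ (by positivity) (by positivity)]
  have h1 : |r^2 - 2*x^2| ≤ 2 * (Real.sqrt (x^2+r^2))^2 := by
    rw [hsq]; rw [abs_le]; constructor <;> nlinarith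
  calc |r^2 - 2*x^2| * r^3 ≤ (2 * (Real.sqrt (x^2+r^2))^2) * (Real.sqrt (x^2+r^2))^3 := by
        apply mul_le_mul h1 _ (by positivity) (by positivity)
        exact pow_le_pow_left₀ hr.le hge 3
    _ = 2 * (Real.sqrt (x^2+r^2))^5 := by ring

lemma stmt15phi_lipschitz {r : ℝ} (hr : 0 < r) (x y : ℝ) :
    |stmt15phi r x - stmt15phi r y| ≤ (2/r^3) * |x - y| := by
  have hdiff : Differentiable ℝ (stmt15phi r) := fun z => (stmt15phi_hasDerivAt hr z).differentiableAt
  have := lipschitzWith_of_nnnorm_deriv_le hdiff (C := (2/r^3 : ℝ).toNNReal) (fun z => by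
    rw [(stmt15phi_hasDerivAt hr z).deriv]
    rw [← NNReal.coe_le_coe]
    simp only [coe_nnnorm, Real.norm_eq_abs]
    rw [Real.coe_toNNReal _ (by positivity)]
    exact stmt15phi_deriv_bound hr z)
  have h := this.dist_le_mul x y
  simp only [Real.dist_eq] at h
  rwa [Real.coe_toNNReal _ (show (0:ℝ) ≤ 2/r^3 by positivity)] at h

lemma stmt15_invsqrt_hasDerivAt {r : ℝ} (hr : 0 < r) (c x : ℝ) :
    HasDerivAt (fun y => 1 / Real.sqrt ((y + c)^2 + r^2)) (-(stmt15phi r (x + c))) x := by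
  have hpos := stmt15_pos hr (x + c)
  have hs := stmt15_sqrt_pos hr (x + c)
  have h1 : HasDerivAt (fun y : ℝ => (y + c)^2 + r^2) (2 * (x + c)) x := by
    simpa using (((hasDerivAt_id x).add_const c).pow 2).add_const (r^2)
  have h2 := h1.sqrt hpos.ne'
  have h3 := h2.inv hs.ne'
  have : HasDerivAt (fun y => (Real.sqrt ((y + c)^2 + r^2))⁻¹)
      (-(stmt15phi r (x + c))) x := by
    refine HasDerivAt.congr_deriv h3 (Eq.symm ?_)
    have hsq : (Real.sqrt ((x+c)^2 + r^2))^2 = (x+c)^2 + r^2 := Real.sq_sqrt hpos.le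
    rw [stmt15phi]
    field_simp
  simpa [one_div] using this

section slices
variable {r m h : ℝ} {Γ : ℝ → ℝ → ℝ → ℝ → ℝ}

lemma stmt15_derivP (hr : 0 < r)
    (hΓ : ∀ Q₁ Q₂ P₁ P₂, Γ Q₁ Q₂ P₁ P₂ =
      (1/2) * ((1/4) * P₂^2 * Q₁^2 + P₁^2)
        - (1/2) * Q₁^2 *
            (1 / Real.sqrt ((Q₂ + Q₁^2/4)^2 + r^2)
              + 1 / Real.sqrt ((Q₂ - Q₁^2/4)^2 + r^2) + h)
        - m)
    (A B C p : ℝ) :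
    deriv (fun y => Γ A B C y) p = (1/4) * A^2 * p := by
  have h0 : HasDerivAt (fun y : ℝ => y^2) (2*p) p := by simpa using hasDerivAt_pow 2 p
  have h1 := ((((h0.const_mul (1/4 : ℝ)).mul_const (A^2)).add_const (C^2)).const_mul (1/2 : ℝ))
  have h2 := (h1.sub_const ((1/2) * A^2 *
      (1 / Real.sqrt ((B + A^2/4)^2 + r^2) + 1 / Real.sqrt ((B - A^2/4)^2 + r^2) + h))).sub_const m
  have H : HasDerivAt (fun y => Γ A B C y) ((1/4) * A^2 * p) p := by
    simp only [hΓ]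
    refine HasDerivAt.congr_deriv h2 (Eq.symm ?_)
    ring
  exact H.deriv

lemma stmt15_derivQ (hr : 0 < r)
    (hΓ : ∀ Q₁ Q₂ P₁ P₂, Γ Q₁ Q₂ P₁ P₂ =
      (1/2) * ((1/4) * P₂^2 * Q₁^2 + P₁^2)
        - (1/2) * Q₁^2 *
            (1 / Real.sqrt ((Q₂ + Q₁^2/4)^2 + r^2)
              + 1 / Real.sqrt ((Q₂ - Q₁^2/4)^2 + r^2) + h)
        - m)
    (A C p q : ℝ) :
    deriv (fun y => Γ A y C p) q
      = (1/2) * A^2 * (stmt15phi r (q + A^2/4) + stmt15phi r (q - A^2/4)) := by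
  have g1 := stmt15_invsqrt_hasDerivAt hr (A^2/4) q
  have g2 := stmt15_invsqrt_hasDerivAt hr (-(A^2/4)) q
  simp only [← sub_eq_add_neg] at g2
  have hsum := (g1.add g2).add_const h
  have hmul := hsum.const_mul ((1/2) * A^2)
  have hK := (hmul.const_sub ((1/2) * ((1/4) * p^2 * A^2 + C^2))).sub_const m
  have H : HasDerivAt (fun y => Γ A y C p)
      ((1/2) * A^2 * (stmt15phi r (q + A^2/4) + stmt15phi r (q - A^2/4))) q := by
    simp only [hΓ]
    refine HasDerivAt.congr_deriv hK (Eq.symm ?_)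
    ring
  exact H.deriv

end slices

set_option maxHeartbeats 1000000 in
/-- Invariance of the symmetric plane under the regularized flow: any solution of
Hamilton's equations for the regularized Hamiltonian Γ₀ of the circular N+2 Sitnikov
problem (ε = 0) with Q₂(τ₀) = P₂(τ₀) = 0 at some time τ₀ satisfies Q₂ ≡ 0 and P₂ ≡ 0. -/
theorem stmt15 (r m h : ℝ) (hr : 0 < r)
    (Γ : ℝ → ℝ → ℝ → ℝ → ℝ)
    (hΓ : ∀ Q₁ Q₂ P₁ P₂, Γ Q₁ Q₂ P₁ P₂ =
      (1/2) * ((1/4) * P₂^2 * Q₁^2 + P₁^2)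
        - (1/2) * Q₁^2 *
            (1 / Real.sqrt ((Q₂ + Q₁^2/4)^2 + r^2)
              + 1 / Real.sqrt ((Q₂ - Q₁^2/4)^2 + r^2) + h)
        - m)
    (a b : ℝ) (Q₁ Q₂ P₁ P₂ : ℝ → ℝ)
    (hQ₁ : ∀ τ ∈ Set.Ioo a b,
      HasDerivAt Q₁ (deriv (fun y => Γ (Q₁ τ) (Q₂ τ) y (P₂ τ)) (P₁ τ)) τ)
    (hQ₂ : ∀ τ ∈ Set.Ioo a b,
      HasDerivAt Q₂ (deriv (fun y => Γ (Q₁ τ) (Q₂ τ) (P₁ τ) y) (P₂ τ)) τ)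
    (hP₁ : ∀ τ ∈ Set.Ioo a b,
      HasDerivAt P₁ (-(deriv (fun y => Γ y (Q₂ τ) (P₁ τ) (P₂ τ)) (Q₁ τ))) τ)
    (hP₂ : ∀ τ ∈ Set.Ioo a b,
      HasDerivAt P₂ (-(deriv (fun y => Γ (Q₁ τ) y (P₁ τ) (P₂ τ)) (Q₂ τ))) τ)
    (τ₀ : ℝ) (hτ₀ : τ₀ ∈ Set.Ioo a b) (hQ₂0 : Q₂ τ₀ = 0) (hP₂0 : P₂ τ₀ = 0) :
    ∀ τ ∈ Set.Ioo a b, Q₂ τ = 0 ∧ P₂ τ = 0 := by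
  intro τ hτ
  -- a compact time window containing τ and τ₀, inside (a,b)
  set c' : ℝ := (a + min τ τ₀) / 2 with hc'def
  set d' : ℝ := (max τ τ₀ + b) / 2 with hd'def
  have hclo : c' < min τ τ₀ := by
    have : a < min τ τ₀ := lt_min hτ.1 hτ₀.1
    simp only [hc'def]; linarith
  have hhid : max τ τ₀ < d' := by
    have : max τ τ₀ < b := max_lt hτ.2 hτ₀.2
    simp only [hd'def]; linarith
  have hac : a < c' := by
    have : a < min τ τ₀ := lt_min hτ.1 hτ₀.1
    simp only [hc'def]; linarith
  have hdb : d' < b := by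
    have : max τ τ₀ < b := max_lt hτ.2 hτ₀.2
    simp only [hd'def]; linarith
  have hcd : c' ≤ d' := by
    have h1 : min τ τ₀ ≤ max τ τ₀ := le_trans (min_le_left _ _) (le_max_left _ _)
    linarith
  have hsub : Set.Icc c' d' ⊆ Set.Ioo a b := fun t ht =>
    ⟨lt_of_lt_of_le hac ht.1, lt_of_le_of_lt ht.2 hdb⟩
  have hτmem : τ ∈ Set.Ioo c' d' :=
    ⟨lt_of_lt_of_le hclo (min_le_left _ _), lt_of_le_of_lt (le_max_left _ _) hhid⟩
  have hτ₀mem : τ₀ ∈ Set.Ioo c' d' :=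
    ⟨lt_of_lt_of_le hclo (min_le_right _ _), lt_of_le_of_lt (le_max_right _ _) hhid⟩
  -- bound for Q₁ on the window
  have hQ₁cont : ContinuousOn Q₁ (Set.Icc c' d') := fun t ht =>
    ((hQ₁ t (hsub ht)).continuousAt).continuousWithinAt
  obtain ⟨B0, hB0⟩ := isCompact_Icc.exists_bound_of_continuousOn hQ₁cont
  set B : ℝ := max B0 0 with hBdef
  have hB : ∀ t ∈ Set.Icc c' d', |Q₁ t| ≤ B := fun t ht =>
    le_trans (by simpa using hB0 t ht) (le_max_left _ _)
  have hBnn : 0 ≤ B := le_max_right _ _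
  -- clamped Q₁
  set σ : ℝ → ℝ := fun t => max c' (min d' t) with hσdef
  have hσmem : ∀ t, σ t ∈ Set.Icc c' d' := fun t =>
    ⟨le_max_left _ _, max_le hcd (min_le_left _ _)⟩
  have hσeq : ∀ t ∈ Set.Icc c' d', σ t = t := fun t ht => by
    simp only [hσdef]
    rw [min_eq_right ht.2, max_eq_right ht.1]
  set u : ℝ → ℝ := fun t => Q₁ (σ t) with hudef
  have hu : ∀ t, |u t| ≤ B := fun t => hB _ (hσmem t)
  have hu2 : ∀ t, (u t)^2 ≤ B^2 := fun t => by
    have := hu t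
    nlinarith [abs_nonneg (u t), sq_abs (u t)]
  -- the (time-dependent) vector field
  set v : ℝ → ℝ × ℝ → ℝ × ℝ := fun t x =>
    ((1/4) * (u t)^2 * x.2,
      -((1/2) * (u t)^2 *
        (stmt15phi r (x.1 + (u t)^2/4) + stmt15phi r (x.1 - (u t)^2/4)))) with hvdef
  set K₀ : ℝ := B^2/4 + 2*B^2/r^3 with hK₀def
  have hK₀nn : 0 ≤ K₀ := by positivity
  have hlip : ∀ t, LipschitzOnWith K₀.toNNReal (v t) Set.univ := by
    intro t
    apply LipschitzWith.lipschitzOnWith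
    apply LipschitzWith.of_dist_le_mul
    intro x y
    rw [Real.coe_toNNReal _ hK₀nn, Prod.dist_eq]
    have hD1 : dist x.1 y.1 ≤ dist x y := by
      rw [Prod.dist_eq]; exact le_max_left _ _
    have hD2 : dist x.2 y.2 ≤ dist x y := by
      rw [Prod.dist_eq]; exact le_max_right _ _
    have hDnn : (0:ℝ) ≤ dist x y := dist_nonneg
    apply max_le
    · -- first component
      simp only [hvdef, Real.dist_eq]
      have e : (1/4) * (u t)^2 * x.2 - (1/4) * (u t)^2 * y.2
          = (1/4) * (u t)^2 * (x.2 - y.2) := by ring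
      rw [e, abs_mul, abs_of_nonneg (by positivity : (0:ℝ) ≤ (1/4) * (u t)^2)]
      have h2 : |x.2 - y.2| ≤ dist x y := by rwa [Real.dist_eq] at hD2
      have hut := hu2 t
      calc (1/4) * (u t)^2 * |x.2 - y.2| ≤ (1/4) * B^2 * |x.2 - y.2| := by
            nlinarith [abs_nonneg (x.2 - y.2)]
        _ ≤ (1/4) * B^2 * dist x y :=
            mul_le_mul_of_nonneg_left h2 (by positivity)
        _ ≤ K₀ * dist x y := by
            apply mul_le_mul_of_nonneg_right _ hDnn
            simp only [hK₀def]
            have : (0:ℝ) ≤ 2*B^2/r^3 := by positivity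
            linarith
    · -- second component
      simp only [hvdef, Real.dist_eq]
      set cc : ℝ := (u t)^2/4 with hccdef
      have e : -((1/2) * (u t)^2 * (stmt15phi r (x.1 + cc) + stmt15phi r (x.1 - cc)))
          - -((1/2) * (u t)^2 * (stmt15phi r (y.1 + cc) + stmt15phi r (y.1 - cc)))
          = -((1/2) * (u t)^2 *
            ((stmt15phi r (x.1 + cc) - stmt15phi r (y.1 + cc))
              + (stmt15phi r (x.1 - cc) - stmt15phi r (y.1 - cc)))) := by ring
      rw [e, abs_neg, abs_mul, abs_of_nonneg (by positivity : (0:ℝ) ≤ (1/2) * (u t)^2)]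
      have l1 : |stmt15phi r (x.1 + cc) - stmt15phi r (y.1 + cc)| ≤ (2/r^3) * |x.1 - y.1| := by
        have := stmt15phi_lipschitz hr (x.1 + cc) (y.1 + cc)
        simpa [show x.1 + cc - (y.1 + cc) = x.1 - y.1 by ring] using this
      have l2 : |stmt15phi r (x.1 - cc) - stmt15phi r (y.1 - cc)| ≤ (2/r^3) * |x.1 - y.1| := by
        have := stmt15phi_lipschitz hr (x.1 - cc) (y.1 - cc)
        simpa [show x.1 - cc - (y.1 - cc) = x.1 - y.1 by ring] using this
      have labs : |(stmt15phi r (x.1 + cc) - stmt15phi r (y.1 + cc))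
            + (stmt15phi r (x.1 - cc) - stmt15phi r (y.1 - cc))|
          ≤ (2/r^3) * |x.1 - y.1| + (2/r^3) * |x.1 - y.1| :=
        le_trans (abs_add_le _ _) (add_le_add l1 l2)
      have h1 : |x.1 - y.1| ≤ dist x y := by rwa [Real.dist_eq] at hD1
      have hr3 : (0:ℝ) < r^3 := by positivity
      have := hu2 t
      have habsnn : (0:ℝ) ≤ |(stmt15phi r (x.1 + cc) - stmt15phi r (y.1 + cc))
            + (stmt15phi r (x.1 - cc) - stmt15phi r (y.1 - cc))| := abs_nonneg _
      calc (1/2) * (u t)^2 * |(stmt15phi r (x.1 + cc) - stmt15phi r (y.1 + cc))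
            + (stmt15phi r (x.1 - cc) - stmt15phi r (y.1 - cc))|
          ≤ (1/2) * B^2 * ((2/r^3) * |x.1 - y.1| + (2/r^3) * |x.1 - y.1|) := by
            apply mul_le_mul _ labs habsnn (by positivity)
            nlinarith
        _ = (2*B^2/r^3) * |x.1 - y.1| := by field_simp; ring
        _ ≤ (2*B^2/r^3) * dist x y :=
            mul_le_mul_of_nonneg_left h1 (by positivity)
        _ ≤ K₀ * dist x y := by
            apply mul_le_mul_of_nonneg_right _ hDnn
            simp only [hK₀def]
            have : (0:ℝ) ≤ B^2/4 := by positivity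
            linarith
  -- the two solutions
  set f : ℝ → ℝ × ℝ := fun t => (Q₂ t, P₂ t) with hfdef
  set g : ℝ → ℝ × ℝ := fun _ => ((0:ℝ), (0:ℝ)) with hgdef
  have hf : ∀ t ∈ Set.Ioo c' d', HasDerivAt f (v t (f t)) t ∧ f t ∈ Set.univ := by
    intro t ht
    refine ⟨?_, trivial⟩
    have htab : t ∈ Set.Ioo a b := hsub (Set.Ioo_subset_Icc_self ht)
    have hut : u t = Q₁ t := by
      simp only [hudef]; rw [hσeq t (Set.Ioo_subset_Icc_self ht)]
    have h1 := hQ₂ t htab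
    have h2 := hP₂ t htab
    rw [stmt15_derivP hr hΓ] at h1
    rw [stmt15_derivQ hr hΓ] at h2
    have := h1.prodMk h2
    convert this using 1
    simp only [hvdef, hfdef, hut]
  have hg : ∀ t ∈ Set.Ioo c' d', HasDerivAt g (v t (g t)) t ∧ g t ∈ Set.univ := by
    intro t ht
    refine ⟨?_, trivial⟩
    have hz : v t ((0:ℝ), (0:ℝ)) = ((0:ℝ), (0:ℝ)) := by
      simp only [hvdef]
      have : stmt15phi r (0 + (u t)^2/4) + stmt15phi r (0 - (u t)^2/4) = 0 := by
        rw [zero_add, zero_sub, stmt15phi_odd]; ring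
      rw [this]
      simp
    simp only [hgdef]
    rw [hz]
    exact hasDerivAt_const t _
  have heq : f τ₀ = g τ₀ := by simp [hfdef, hgdef, hQ₂0, hP₂0]
  have hEq := ODE_solution_unique_of_mem_Ioo (fun t _ => hlip t) hτ₀mem hf hg heq hτmem
  simp only [hfdef, hgdef] at hEq
  exact ⟨congrArg Prod.fst hEq, congrArg Prod.snd hEq⟩
end
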